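/- Let A be a real N×N matrix, let b_0, b_1, …, b_p be vectors in ℝ^N, let B be the N×p matrix whose k-th column is b_{p+1−k} (i.e. B = [b_p, …, b_2, b_1]), let K be the p×p nilpotent matrix with K(i, i+1) = 1 for 1 ≤ i ≤ p−1 and all other entries zero, let Ã be the (N+p)×(N+p) block matrix [[A, B], [0, K]], let v = [b_0; e_p] ∈ ℝ^{N+p} where e_p is the p-th standard basis vector of ℝ^p, and let τ ∈ ℝ. Then the first N components of w = e^{τÃ} v are given by w(1:N) = Σ_{j=0}^{p} τ^j φ_j(τA) b_j. -/

import Mathlib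

open Matrix MeasureTheory
open scoped Nat ENNReal NNReal

attribute [local instance] Matrix.normedAddCommGroup Matrix.normedSpace

/-- The matrix `φ`-functions: `φ₀(M) = e^M` and
`φ_k(M) = ∫_0^1 e^{(1-θ)M} θ^{k-1}/(k-1)! dθ` for `k ≥ 1`. -/
noncomputable def phi {n : ℕ} (k : ℕ) (M : Matrix (Fin n) (Fin n) ℝ) :
    Matrix (Fin n) (Fin n) ℝ :=
  if k = 0 then NormedSpace.exp M
  else ∫ θ in (0:ℝ)..1, ((θ ^ (k - 1) / (k - 1)! : ℝ)) • NormedSpace.exp ((1 - θ) • M)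


/-- The `p × p` nilpotent matrix with `K(i, i+1) = 1` and all other entries zero. -/
noncomputable def Ktilde (p : ℕ) : Matrix (Fin p) (Fin p) ℝ :=
  Matrix.of fun i j => if (j : ℕ) = (i : ℕ) + 1 then 1 else 0

/-- The `N × p` matrix whose `k`-th column is `b_{p+1-k}`, i.e. `B = [b_p, …, b_2, b_1]`. -/
noncomputable def Bmat {N : ℕ} (p : ℕ) (b : ℕ → Fin N → ℝ) : Matrix (Fin N) (Fin p) ℝ :=
  Matrix.of fun i j => b (p - (j : ℕ)) i

/-- The `p`-th standard basis vector of `ℝ^p` (last coordinate equal to one). -/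
noncomputable def ep (p : ℕ) : Fin p → ℝ := fun i => if (i : ℕ) = p - 1 then 1 else 0

/-! ### Auxiliary material -/

namespace PhiAux

variable {ι κ : Type*} [Fintype ι] [Fintype κ]

/-- Evaluation of `M.mulVec v` at `i`, as a continuous linear map in `M`. -/
noncomputable def mvCLM (v : κ → ℝ) (i : ι) : Matrix ι κ ℝ →L[ℝ] ℝ :=
  LinearMap.toContinuousLinearMap
    { toFun := fun X => X.mulVec v i
      map_add' := fun X Y => by simp [Matrix.add_mulVec]
      map_smul' := fun c X => by simp [Matrix.smul_mulVec] }

@[simp] lemma mvCLM_apply (v : κ → ℝ) (i : ι) (X : Matrix ι κ ℝ) :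
    mvCLM v i X = X.mulVec v i := rfl

lemma sum_mulVec {R : Type*} [NonUnitalNonAssocSemiring R] {s : Finset ℕ}
    (P : ℕ → Matrix ι κ R) (x : κ → R) :
    (∑ k ∈ s, P k).mulVec x = ∑ k ∈ s, (P k).mulVec x := by
  funext i
  simp only [Matrix.mulVec, dotProduct, Finset.sum_apply, Matrix.sum_apply,
    Finset.sum_mul]
  exact Finset.sum_comm

lemma mulVec_norm_le [DecidableEq ι] (M : Matrix ι ι ℝ) (v : ι → ℝ) :
    ‖M.mulVec v‖ ≤ (Fintype.card ι : ℝ) * ‖M‖ * ‖v‖ := by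
  rw [pi_norm_le_iff_of_nonneg (by positivity)]
  intro i
  calc ‖M.mulVec v i‖ = ‖∑ j, M i j * v j‖ := rfl
    _ ≤ ∑ j, ‖M i j * v j‖ := norm_sum_le _ _
    _ ≤ ∑ _j : ι, ‖M‖ * ‖v‖ := Finset.sum_le_sum fun j _ => by
        rw [norm_mul]
        exact mul_le_mul (M.norm_entry_le_entrywise_sup_norm) (norm_le_pi_norm v j)
          (norm_nonneg _) (norm_nonneg _)
    _ = (Fintype.card ι : ℝ) * ‖M‖ * ‖v‖ := by
        simp [Finset.sum_const, mul_assoc]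

lemma pow_mulVec_norm_le [DecidableEq ι] (M : Matrix ι ι ℝ) (v : ι → ℝ) (m : ℕ) :
    ‖(M ^ m).mulVec v‖ ≤ ((Fintype.card ι : ℝ) * ‖M‖) ^ m * ‖v‖ := by
  induction m with
  | zero => simp [Matrix.one_mulVec]
  | succ m ih =>
      rw [pow_succ', ← Matrix.mulVec_mulVec]
      calc ‖M.mulVec ((M ^ m).mulVec v)‖
          ≤ (Fintype.card ι : ℝ) * ‖M‖ * ‖(M ^ m).mulVec v‖ := mulVec_norm_le M _
        _ ≤ (Fintype.card ι : ℝ) * ‖M‖ * (((Fintype.card ι : ℝ) * ‖M‖) ^ m * ‖v‖) := by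
            have h0 : (0:ℝ) ≤ (Fintype.card ι : ℝ) * ‖M‖ := by positivity
            exact mul_le_mul_of_nonneg_left ih h0
        _ = ((Fintype.card ι : ℝ) * ‖M‖) ^ (m + 1) * ‖v‖ := by ring

lemma pow_mulVec_entry_le [DecidableEq ι] (M : Matrix ι ι ℝ) (v : ι → ℝ) (m : ℕ) (i : ι) :
    |((M ^ m).mulVec v) i| ≤ ((Fintype.card ι : ℝ) * ‖M‖) ^ m * ‖v‖ := by
  rw [← Real.norm_eq_abs]
  exact le_trans (norm_le_pi_norm _ i) (pow_mulVec_norm_le M v m)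

set_option synthInstance.maxHeartbeats 1000000 in
set_option maxHeartbeats 1000000 in
lemma summable_phi_series [DecidableEq ι] (j : ℕ) (M : Matrix ι ι ℝ) :
    Summable fun m : ℕ => (((m + j)! : ℝ)⁻¹) • M ^ m := by
  letI : SeminormedRing (Matrix ι ι ℝ) := Matrix.linftyOpSemiNormedRing
  letI : NormedRing (Matrix ι ι ℝ) := Matrix.linftyOpNormedRing
  letI : NormedSpace ℝ (Matrix ι ι ℝ) := Matrix.linftyOpNormedSpace
  letI : NormedAlgebra ℝ (Matrix ι ι ℝ) := Matrix.linftyOpNormedAlgebra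
  haveI : @CompleteSpace (Matrix ι ι ℝ) PseudoMetricSpace.toUniformSpace := FiniteDimensional.complete ℝ _
  refine Summable.of_norm_bounded (NormedSpace.norm_expSeries_summable' (𝕂 := ℝ) M) ?_
  intro m
  rw [norm_smul, norm_smul]
  have h1 : ‖(((m + j)! : ℝ))⁻¹‖ ≤ ‖((m ! : ℝ))⁻¹‖ := by
    rw [Real.norm_eq_abs, Real.norm_eq_abs, abs_of_nonneg (by positivity),
      abs_of_nonneg (by positivity)]
    have : (m ! : ℝ) ≤ ((m + j)! : ℝ) := by
      exact_mod_cast Nat.factorial_le (Nat.le_add_right m j)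
    exact inv_anti₀ (by exact_mod_cast Nat.factorial_pos m) this
  exact mul_le_mul_of_nonneg_right h1 (norm_nonneg _)

lemma exp_mulVec_entry [DecidableEq ι] (M : Matrix ι ι ℝ) (v : ι → ℝ) (i : ι) :
    (NormedSpace.exp M).mulVec v i = ∑' m : ℕ, ((m ! : ℝ)⁻¹) * ((M ^ m).mulVec v) i := by
  have hs := summable_phi_series 0 M
  simp only [Nat.add_zero] at hs
  have hexp : NormedSpace.exp M = ∑' m : ℕ, ((m ! : ℝ)⁻¹) • M ^ m := by
    rw [NormedSpace.exp_eq_tsum ℝ]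
  rw [hexp]
  have hmap := (mvCLM v i).map_tsum hs
  simp only [mvCLM_apply] at hmap
  rw [hmap]
  refine tsum_congr fun m => ?_
  rw [Matrix.smul_mulVec, Pi.smul_apply, smul_eq_mul]

lemma exp_one_param_continuous [DecidableEq ι] (M : Matrix ι ι ℝ) :
    Continuous fun θ : ℝ => NormedSpace.exp ((1 - θ) • M) := by
  letI : SeminormedRing (Matrix ι ι ℝ) := Matrix.linftyOpSemiNormedRing
  letI : NormedRing (Matrix ι ι ℝ) := Matrix.linftyOpNormedRing
  letI : NormedAlgebra ℝ (Matrix ι ι ℝ) := Matrix.linftyOpNormedAlgebra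
  letI : NormedAlgebra ℚ (Matrix ι ι ℝ) := .restrictScalars ℚ ℝ _
  haveI : @CompleteSpace (Matrix ι ι ℝ) PseudoMetricSpace.toUniformSpace := FiniteDimensional.complete ℝ _
  exact NormedSpace.exp_continuous.comp (by fun_prop)

lemma beta_nat (k : ℕ) : ∀ a : ℕ, (∫ x in (0:ℝ)..1, x ^ a * (1 - x) ^ k)
    = (a ! * k ! : ℝ) / (a + k + 1)! := by
  induction k with
  | zero =>
      intro a
      have ha : ((a+1)! : ℝ) = ((a:ℝ)+1) * a ! := by
        push_cast [Nat.factorial_succ a]; ring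
      have h1 : ((a:ℝ) + 1) ≠ 0 := by positivity
      have h2 : (a ! : ℝ) ≠ 0 := by exact_mod_cast Nat.factorial_ne_zero a
      simp only [pow_zero, mul_one]
      rw [integral_pow, one_pow, zero_pow (Nat.succ_ne_zero a),
        show a + 0 + 1 = a + 1 from rfl, ha]
      push_cast
      field_simp
      simp
  | succ k ih =>
      intro a
      have hu : ∀ x ∈ Set.uIcc (0:ℝ) 1,
          HasDerivAt (fun x : ℝ => (1 - x) ^ (k+1)) (-(((k:ℝ)+1) * (1-x)^k)) x := by
        intro x _
        have h1 : HasDerivAt (fun x : ℝ => 1 - x) (-1) x := by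
          exact (hasDerivAt_id x).const_sub (1:ℝ)
        have h2 := (hasDerivAt_pow (k+1) (1-x)).comp x h1
        refine h2.congr_deriv ?_
        push_cast
        ring
      have hv : ∀ x ∈ Set.uIcc (0:ℝ) 1,
          HasDerivAt (fun x : ℝ => ((a:ℝ)+1)⁻¹ * x ^ (a+1)) (x ^ a) x := by
        intro x _
        have h2 := (hasDerivAt_pow (a+1) x).const_mul (((a:ℝ)+1)⁻¹)
        refine h2.congr_deriv ?_
        have h1 : ((a:ℝ) + 1) ≠ 0 := by positivity
        push_cast
        field_simp
      have hu' : IntervalIntegrable (fun x : ℝ => -(((k:ℝ)+1) * (1-x)^k)) volume 0 1 :=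
        (by fun_prop : Continuous fun x : ℝ => -(((k:ℝ)+1) * (1-x)^k)).intervalIntegrable 0 1
      have hv' : IntervalIntegrable (fun x : ℝ => x ^ a) volume 0 1 :=
        (continuous_pow a).intervalIntegrable 0 1
      have hibp := intervalIntegral.integral_mul_deriv_eq_deriv_mul hu hv hu' hv'
      have hL : (∫ x in (0:ℝ)..1, x ^ a * (1 - x) ^ (k+1))
          = ∫ x in (0:ℝ)..1, (1 - x) ^ (k+1) * x ^ a := by
        refine intervalIntegral.integral_congr fun x _ => ?_
        ring
      have h3 : ∀ x : ℝ, (-(((k:ℝ)+1) * (1-x)^k)) * (((a:ℝ)+1)⁻¹ * x ^ (a+1))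
          = (-(((k:ℝ)+1) * ((a:ℝ)+1)⁻¹)) * (x ^ (a+1) * (1-x)^k) := fun x => by ring
      rw [hL, hibp]
      simp only [h3]
      rw [intervalIntegral.integral_const_mul, ih (a+1)]
      have e1 : ((a+1) + k + 1) = (a + (k+1) + 1) := by omega
      rw [e1]
      have hfa : ((a+1)! : ℝ) = ((a:ℝ)+1) * a ! := by exact_mod_cast Nat.factorial_succ a
      have hfk : ((k+1)! : ℝ) = ((k:ℝ)+1) * k ! := by exact_mod_cast Nat.factorial_succ k
      rw [hfa, hfk]
      have h1 : ((a:ℝ) + 1) ≠ 0 := by positivity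
      have h2 : ((a + (k+1) + 1)! : ℝ) ≠ 0 := by
        exact_mod_cast Nat.factorial_ne_zero _
      simp only [one_pow, sub_self, zero_pow (Nat.succ_ne_zero k), one_mul, zero_mul,
        mul_zero, zero_sub, mul_one, pow_succ, pow_zero]
      field_simp

lemma summable_abs_pow_entry {n : ℕ} (M : Matrix (Fin n) (Fin n) ℝ) (v : Fin n → ℝ)
    (i : Fin n) (d : ℝ) (hd : 0 < d) :
    Summable fun m : ℕ => |((M ^ m).mulVec v) i| / (d * m !) := by
  refine Summable.of_nonneg_of_le (fun m => by positivity) (fun m => ?_)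
    (((Real.summable_pow_div_factorial ((Fintype.card (Fin n) : ℝ) * ‖M‖)).mul_left
      (‖v‖ / d)))
  have h1 := pow_mulVec_entry_le M v m i
  rw [div_le_iff₀ (by positivity)] at *
  calc |((M ^ m).mulVec v) i| ≤ ((Fintype.card (Fin n) : ℝ) * ‖M‖) ^ m * ‖v‖ := h1
    _ = ‖v‖ / d * (((Fintype.card (Fin n):ℝ) * ‖M‖) ^ m / m !) * (d * m !) := by
        field_simp

lemma phi_mulVec_entry {n : ℕ} (j : ℕ) (M : Matrix (Fin n) (Fin n) ℝ) (v : Fin n → ℝ)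
    (i : Fin n) :
    (phi j M).mulVec v i = ∑' m : ℕ, (((m + j)! : ℝ)⁻¹) * ((M ^ m).mulVec v) i := by
  cases j with
  | zero =>
      rw [phi, if_pos rfl]
      simpa using exp_mulVec_entry M v i
  | succ k =>
      classical
      set c : ℕ → ℝ := fun m => ((M ^ m).mulVec v) i with hc
      set g : ℕ → ℝ → ℝ := fun m θ => (c m / (k ! * m !)) * (θ ^ k * (1-θ) ^ m) with hg
      have hphi : phi (k+1) M
          = ∫ θ in (0:ℝ)..1, ((θ ^ k / k ! : ℝ)) • NormedSpace.exp ((1 - θ) • M) := by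
        rw [phi, if_neg (Nat.succ_ne_zero k)]
        simp
      haveI : CompleteSpace (Matrix (Fin n) (Fin n) ℝ) := FiniteDimensional.complete ℝ _
      have hC : Continuous fun θ : ℝ =>
          ((θ ^ k / k ! : ℝ)) • NormedSpace.exp ((1 - θ) • M) :=
        ((continuous_pow k).div_const _).smul (exp_one_param_continuous M)
      letI : ENormedAddMonoid (Matrix (Fin n) (Fin n) ℝ) := NormedAddGroup.toENormedAddMonoid
      have hInt : IntervalIntegrable (fun θ : ℝ =>
          ((θ ^ k / k ! : ℝ)) • NormedSpace.exp ((1 - θ) • M)) volume 0 1 :=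
        hC.intervalIntegrable 0 1
      have h1 := (mvCLM v i).intervalIntegral_comp_comm hInt
      change (∫ θ in (0:ℝ)..1, (((θ ^ k / k ! : ℝ)) • NormedSpace.exp ((1 - θ) • M)).mulVec v i)
        = (∫ θ in (0:ℝ)..1, ((θ ^ k / k ! : ℝ)) • NormedSpace.exp ((1 - θ) • M)).mulVec v i at h1
      rw [hphi, ← h1]
      have hF : ∀ θ : ℝ, (((θ ^ k / k ! : ℝ)) • NormedSpace.exp ((1 - θ) • M)).mulVec v i
          = ∑' m : ℕ, g m θ := by
        intro θ
        rw [Matrix.smul_mulVec, Pi.smul_apply, smul_eq_mul, exp_mulVec_entry,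
          ← tsum_mul_left]
        refine tsum_congr fun m => ?_
        rw [smul_pow, Matrix.smul_mulVec, Pi.smul_apply, smul_eq_mul, hg]
        simp only [← hc]
        ring
      simp only [hF]
      have hsumc : Summable fun m : ℕ => |c m| / ((k ! : ℝ) * m !) := by
        have := summable_abs_pow_entry M v i (k ! : ℝ) (by exact_mod_cast Nat.factorial_pos k)
        simpa [hc] using this
      have hmeas : ∀ m : ℕ, AEStronglyMeasurable (g m) (volume.restrict (Set.Ioc (0:ℝ) 1)) := by
        intro m
        exact ((continuous_const.mul ((continuous_pow k).mul (by fun_prop))).aestronglyMeasurable)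
      have hlint : (∑' m : ℕ, ∫⁻ θ in Set.Ioc (0:ℝ) 1, ‖g m θ‖₊ ∂volume) ≠ ⊤ := by
        have hb : ∀ m : ℕ, (∫⁻ θ in Set.Ioc (0:ℝ) 1, ‖g m θ‖₊ ∂volume)
            ≤ ENNReal.ofReal (|c m| / ((k ! : ℝ) * m !)) := by
          intro m
          have hptw : ∀ θ ∈ Set.Ioc (0:ℝ) 1,
              (‖g m θ‖₊ : ℝ≥0∞) ≤ ENNReal.ofReal (|c m| / ((k ! : ℝ) * m !)) := by
            intro θ hθ
            rw [← enorm_eq_nnnorm, ← ofReal_norm]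
            refine ENNReal.ofReal_le_ofReal ?_
            obtain ⟨h0, h1'⟩ := hθ
            have hθ0 : (0:ℝ) ≤ θ := le_of_lt h0
            have h1θ : (0:ℝ) ≤ 1 - θ := by linarith
            have e2 : |θ ^ k * (1-θ) ^ m| ≤ 1 := by
              rw [abs_mul, abs_of_nonneg (by positivity), abs_of_nonneg (by positivity)]
              exact mul_le_one₀ (pow_le_one₀ hθ0 h1') (by positivity)
                (pow_le_one₀ h1θ (by linarith))
            have hkm : (0:ℝ) < (k ! : ℝ) * m ! := by positivity
            have e3 : |c m / ((k ! : ℝ) * m !)| = |c m| / ((k ! : ℝ) * m !) := by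
              rw [abs_div, abs_of_pos hkm]
            have : ‖g m θ‖ = |c m / ((k ! : ℝ) * m !)| * |θ ^ k * (1-θ) ^ m| := by
              simp only [hg, Real.norm_eq_abs, abs_mul]
            rw [this, e3]
            exact mul_le_of_le_one_right (by positivity) e2
          refine le_trans (setLIntegral_mono measurable_const hptw) ?_
          rw [setLIntegral_const]
          simp [Real.volume_Ioc]
        refine ne_top_of_le_ne_top ?_ (ENNReal.tsum_le_tsum hb)
        rw [← ENNReal.ofReal_tsum_of_nonneg (fun m => by positivity) hsumc]
        exact ENNReal.ofReal_ne_top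
      rw [intervalIntegral.integral_of_le zero_le_one,
        MeasureTheory.integral_tsum hmeas hlint]
      refine tsum_congr fun m => ?_
      rw [← intervalIntegral.integral_of_le (zero_le_one (α := ℝ))]
      simp only [hg]
      rw [intervalIntegral.integral_const_mul, beta_nat m k]
      have e1 : ((k + m + 1)! : ℝ) ≠ 0 := by exact_mod_cast Nat.factorial_ne_zero _
      have e2 : (k ! : ℝ) ≠ 0 := by exact_mod_cast Nat.factorial_ne_zero _
      have e3 : (m ! : ℝ) ≠ 0 := by exact_mod_cast Nat.factorial_ne_zero _
      have e4 : ((m + (k+1))! : ℝ) = ((k + m + 1)! : ℝ) := by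
        rw [show m + (k+1) = k + m + 1 by omega]
      rw [e4]
      field_simp
      rfl

end PhiAux

/-! ### The structural lemmas about the block matrix -/

namespace PhiAux

lemma Ktilde_mulVec {p : ℕ} (g : Fin p → ℝ) (i : Fin p) :
    (Ktilde p).mulVec g i = if h : (i : ℕ) + 1 < p then g ⟨(i:ℕ)+1, h⟩ else 0 := by
  rw [Matrix.mulVec]
  show (fun j => Ktilde p i j) ⬝ᵥ g = _
  rw [dotProduct]
  simp only [Ktilde, Matrix.of_apply, ite_mul, one_mul, zero_mul]
  split_ifs with h
  · rw [Finset.sum_eq_single (⟨(i:ℕ)+1, h⟩ : Fin p)]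
    · simp
    · intro j _ hj
      rw [if_neg]
      intro hj'
      exact hj (Fin.ext hj')
    · simp
  · refine Finset.sum_eq_zero fun j _ => ?_
    rw [if_neg]
    intro hj'
    exact h (hj' ▸ j.isLt)

lemma Ktilde_pow_mulVec {p : ℕ} (k : ℕ) :
    ((Ktilde p) ^ k).mulVec (ep p)
      = fun i : Fin p => if (i : ℕ) + k = p - 1 then (1:ℝ) else 0 := by
  induction k with
  | zero =>
      funext i
      rw [pow_zero, Matrix.one_mulVec]
      simp [ep]
  | succ k ih =>
      funext i
      rw [pow_succ', ← Matrix.mulVec_mulVec, ih, Ktilde_mulVec]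
      by_cases h : (i:ℕ) + 1 < p
      · rw [dif_pos h]
        exact if_congr (by simp only [Fin.val_mk]; omega) rfl rfl
      · rw [dif_neg h, if_neg]
        have := i.isLt
        omega

lemma Bmat_mulVec_ind {N p : ℕ} (b : ℕ → Fin N → ℝ) (k : ℕ) :
    (Bmat p b).mulVec (fun i : Fin p => if (i : ℕ) + k = p - 1 then (1:ℝ) else 0)
      = if k < p then b (k+1) else 0 := by
  by_cases hk : k < p
  · rw [if_pos hk]
    funext i
    rw [Matrix.mulVec]
    show (fun j => Bmat p b i j) ⬝ᵥ _ = _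
    rw [dotProduct]
    rw [Finset.sum_eq_single (⟨p - 1 - k, by omega⟩ : Fin p)]
    · simp only [Bmat, Matrix.of_apply, Fin.val_mk]
      rw [if_pos (by omega), mul_one, show p - (p - 1 - k) = k + 1 by omega]
    · intro j _ hj
      rw [if_neg, mul_zero]
      intro hj'
      exact hj (Fin.ext (by simp only [Fin.val_mk]; omega))
    · intro hmem
      exact absurd (Finset.mem_univ _) hmem
  · rw [if_neg hk]
    have hv : (fun i : Fin p => if (i : ℕ) + k = p - 1 then (1:ℝ) else 0) = 0 := by
      funext i
      rw [if_neg, Pi.zero_apply]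
      have : (i:ℕ) < p := i.isLt
      omega
    rw [hv, Matrix.mulVec_zero]

lemma fromBlocks_pow {N p : ℕ} (A : Matrix (Fin N) (Fin N) ℝ) (B : Matrix (Fin N) (Fin p) ℝ)
    (K : Matrix (Fin p) (Fin p) ℝ) (n : ℕ) :
    (Matrix.fromBlocks A B 0 K) ^ n
      = Matrix.fromBlocks (A ^ n)
          (∑ k ∈ Finset.range n, A ^ (n - 1 - k) * B * K ^ k) 0 (K ^ n) := by
  induction n with
  | zero => simp [Matrix.fromBlocks_one]
  | succ n ih =>
      rw [pow_succ', ih, Matrix.fromBlocks_multiply]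
      have htr : A * (∑ k ∈ Finset.range n, A ^ (n - 1 - k) * B * K ^ k) + B * K ^ n
          = ∑ k ∈ Finset.range (n+1), A ^ (n + 1 - 1 - k) * B * K ^ k := by
        rw [Matrix.mul_sum, Finset.sum_range_succ]
        congr 1
        · refine Finset.sum_congr rfl fun k hk => ?_
          rw [Finset.mem_range] at hk
          rw [← Matrix.mul_assoc, ← Matrix.mul_assoc, ← pow_succ']
          congr 3
          omega
        · rw [show n + 1 - 1 - n = 0 by omega, pow_zero, Matrix.one_mul]
      rw [htr]
      simp only [Matrix.mul_zero, Matrix.zero_mul, add_zero, zero_add]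
      rw [← pow_succ' A n, ← pow_succ' K n]

/-- The summand family for the final rearrangement. -/
noncomputable def Gt {N : ℕ} (A : Matrix (Fin N) (Fin N) ℝ) (b : ℕ → Fin N → ℝ) (τ : ℝ)
    (i : Fin N) (j n : ℕ) : ℝ :=
  if j ≤ n then ((n ! : ℝ)⁻¹ * τ ^ n) * (((A ^ (n - j)).mulVec (b j)) i) else 0

lemma Gt_summable {N : ℕ} (A : Matrix (Fin N) (Fin N) ℝ) (b : ℕ → Fin N → ℝ) (τ : ℝ)
    (i : Fin N) (j : ℕ) : Summable (Gt A b τ i j) := by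
  set s : ℝ := |τ| * ((Fintype.card (Fin N) : ℝ) * ‖A‖ + 1) with hs
  refine Summable.of_norm_bounded (g := fun n => ‖b j‖ * (s ^ n / n !))
    ((Real.summable_pow_div_factorial s).mul_left _) ?_
  intro n
  rw [Gt]
  split_ifs with h
  · rw [Real.norm_eq_abs, abs_mul, abs_mul]
    have h1 : |((A ^ (n - j)).mulVec (b j)) i|
        ≤ ((Fintype.card (Fin N) : ℝ) * ‖A‖) ^ (n - j) * ‖b j‖ :=
      pow_mulVec_entry_le A (b j) (n - j) i
    have hca : (0:ℝ) ≤ (Fintype.card (Fin N) : ℝ) * ‖A‖ := by positivity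
    have h2 : ((Fintype.card (Fin N) : ℝ) * ‖A‖) ^ (n - j)
        ≤ ((Fintype.card (Fin N) : ℝ) * ‖A‖ + 1) ^ n := by
      calc ((Fintype.card (Fin N) : ℝ) * ‖A‖) ^ (n - j)
          ≤ ((Fintype.card (Fin N) : ℝ) * ‖A‖ + 1) ^ (n - j) :=
            pow_le_pow_left₀ hca (by linarith) _
        _ ≤ ((Fintype.card (Fin N) : ℝ) * ‖A‖ + 1) ^ n :=
            pow_le_pow_right₀ (by linarith) (Nat.sub_le n j)
    have h3 : |((n ! : ℝ))⁻¹| = ((n !:ℝ))⁻¹ := abs_of_pos (by positivity)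
    have h4 : |τ ^ n| = |τ| ^ n := abs_pow τ n
    rw [h3, h4]
    calc ((n !:ℝ))⁻¹ * |τ| ^ n * |((A ^ (n - j)).mulVec (b j)) i|
        ≤ ((n !:ℝ))⁻¹ * |τ| ^ n * (((Fintype.card (Fin N) : ℝ) * ‖A‖ + 1) ^ n * ‖b j‖) := by
          refine mul_le_mul_of_nonneg_left (le_trans h1 ?_) (by positivity)
          exact mul_le_mul_of_nonneg_right h2 (norm_nonneg _)
      _ = ‖b j‖ * (s ^ n / n !) := by
          rw [hs, mul_pow]
          field_simp
  · simp
    positivity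

end PhiAux

open PhiAux in
theorem stmt0 {N p : ℕ} (hp : 0 < p) (A : Matrix (Fin N) (Fin N) ℝ)
    (b : ℕ → Fin N → ℝ) (τ : ℝ)
    (w : Fin N ⊕ Fin p → ℝ)
    (hw : w = (NormedSpace.exp
        (τ • Matrix.fromBlocks A (Bmat p b) 0 (Ktilde p))).mulVec
        (Sum.elim (b 0) (ep p))) :
    ∀ i : Fin N,
      w (Sum.inl i)
        = ∑ j ∈ Finset.range (p + 1), (τ ^ j • (phi j (τ • A)).mulVec (b j)) i := by
  classical
  intro i
  subst hw
  set Atil : Matrix (Fin N ⊕ Fin p) (Fin N ⊕ Fin p) ℝ :=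
    Matrix.fromBlocks A (Bmat p b) 0 (Ktilde p) with hAtil
  set v : Fin N ⊕ Fin p → ℝ := Sum.elim (b 0) (ep p) with hv
  -- top entries of the powers of `Atil` applied to `v`
  have htop : ∀ n : ℕ, ((Atil ^ n).mulVec v) (Sum.inl i)
      = ((A ^ n).mulVec (b 0)) i
        + ∑ k ∈ Finset.range n,
            (if k < p then ((A ^ (n - 1 - k)).mulVec (b (k+1))) i else 0) := by
    intro n
    rw [hAtil, fromBlocks_pow, hv, Matrix.fromBlocks_mulVec]
    simp only [Sum.elim_inl, Sum.elim_comp_inl, Sum.elim_comp_inr, Pi.add_apply]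
    congr 1
    rw [PhiAux.sum_mulVec, Finset.sum_apply]
    refine Finset.sum_congr rfl fun k _ => ?_
    rw [← Matrix.mulVec_mulVec, ← Matrix.mulVec_mulVec, Ktilde_pow_mulVec,
      Bmat_mulVec_ind]
    by_cases hkp : k < p
    · rw [if_pos hkp, if_pos hkp]
    · rw [if_neg hkp, if_neg hkp, Matrix.mulVec_zero]
      rfl
  -- the exponential evaluated entrywise
  have hexp : ((NormedSpace.exp (τ • Atil)).mulVec v) (Sum.inl i)
      = ∑' n : ℕ, ((n ! : ℝ)⁻¹) * (((τ • Atil) ^ n).mulVec v) (Sum.inl i) :=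
    exp_mulVec_entry (τ • Atil) v (Sum.inl i)
  rw [hexp]
  -- rewrite each term as a finite sum of `Gt` values
  have key : ∀ n : ℕ, ((n ! : ℝ)⁻¹) * (((τ • Atil) ^ n).mulVec v) (Sum.inl i)
      = ∑ j ∈ Finset.range (p + 1), Gt A b τ i j n := by
    intro n
    rw [smul_pow, Matrix.smul_mulVec, Pi.smul_apply, smul_eq_mul, htop n]
    rw [Finset.sum_range_succ']
    have hG0 : Gt A b τ i 0 n = ((n ! : ℝ)⁻¹ * τ ^ n) * ((A ^ n).mulVec (b 0)) i := by
      rw [Gt, if_pos (Nat.zero_le n), Nat.sub_zero]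
    have hsum_eq : ∑ j ∈ Finset.range p, Gt A b τ i (j+1) n
        = ∑ k ∈ Finset.range n, (((n ! : ℝ)⁻¹ * τ ^ n)
            * (if k < p then ((A ^ (n - 1 - k)).mulVec (b (k+1))) i else 0)) := by
      set c : ℕ → ℝ := fun k => if k < n ∧ k < p then
        (((n ! : ℝ)⁻¹ * τ ^ n) * ((A ^ (n - 1 - k)).mulVec (b (k+1))) i) else 0 with hcdef
      have hc1 : ∀ j ∈ Finset.range p, Gt A b τ i (j+1) n = c j := by
        intro j hj
        rw [Finset.mem_range] at hj
        rw [Gt]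
        simp only [hcdef]
        by_cases hjn : j + 1 ≤ n
        · rw [if_pos hjn, if_pos (show j < n ∧ j < p from ⟨by omega, hj⟩)]
          congr 3
          omega
        · rw [if_neg hjn, if_neg (by omega)]
      have hc2 : ∀ k ∈ Finset.range n, (((n ! : ℝ)⁻¹ * τ ^ n)
          * (if k < p then ((A ^ (n - 1 - k)).mulVec (b (k+1))) i else 0)) = c k := by
        intro k hk
        rw [Finset.mem_range] at hk
        simp only [hcdef]
        by_cases hkp : k < p
        · rw [if_pos hkp, if_pos (show k < n ∧ k < p from ⟨hk, hkp⟩)]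
        · rw [if_neg hkp, if_neg (by omega), mul_zero]
      rw [Finset.sum_congr rfl hc1, Finset.sum_congr rfl hc2]
      have h1 : ∑ j ∈ Finset.range p, c j = ∑ j ∈ Finset.range (n + p), c j := by
        refine Finset.sum_subset (Finset.range_subset_range.mpr (by omega)) ?_
        intro x _ hx
        rw [Finset.mem_range] at hx
        simp only [hcdef]
        rw [if_neg (by omega)]
      have h2 : ∑ k ∈ Finset.range n, c k = ∑ k ∈ Finset.range (n + p), c k := by
        refine Finset.sum_subset (Finset.range_subset_range.mpr (by omega)) ?_
        intro x _ hx
        rw [Finset.mem_range] at hx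
        simp only [hcdef]
        rw [if_neg (by omega)]
      rw [h1, ← h2]
    rw [hsum_eq, hG0, ← Finset.mul_sum]
    ring
  rw [tsum_congr key]
  rw [Summable.tsum_finsetSum (fun j _ => Gt_summable A b τ i j)]
  refine Finset.sum_congr rfl fun j _ => ?_
  -- evaluate `∑' n, Gt A b τ i j n`
  have hsummable := Gt_summable A b τ i j
  rw [← Summable.sum_add_tsum_nat_add j hsummable]
  have h0 : ∑ n ∈ Finset.range j, Gt A b τ i j n = 0 :=
    Finset.sum_eq_zero fun n hn => by
      rw [Finset.mem_range] at hn
      rw [Gt, if_neg (by omega)]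
  rw [h0, zero_add]
  have hterm : ∀ m : ℕ, Gt A b τ i j (m + j)
      = τ ^ j * ((((m + j)! : ℝ)⁻¹) * (τ ^ m * (((A ^ m).mulVec (b j)) i))) := by
    intro m
    rw [Gt, if_pos (Nat.le_add_left j m), Nat.add_sub_cancel]
    rw [pow_add]
    ring
  have hrhs : (τ ^ j • (phi j (τ • A)).mulVec (b j)) i
      = ∑' m : ℕ, τ ^ j * ((((m + j)! : ℝ)⁻¹) * (τ ^ m * (((A ^ m).mulVec (b j)) i))) := by
    rw [Pi.smul_apply, smul_eq_mul, phi_mulVec_entry j (τ • A) (b j) i, ← tsum_mul_left]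
    refine tsum_congr fun m => ?_
    rw [smul_pow, Matrix.smul_mulVec, Pi.smul_apply, smul_eq_mul]
  rw [hrhs]
  exact tsum_congr hterm
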